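/- arXiv:2109.12981 — 9 statements merged into one kernel-verified Lean document; each statement's English description precedes it below -/
import Mathlib

section
/- Let 0 → X →f E →g Z → 0 be an almost split sequence of finitely generated right A-modules. Then this sequence is perfect exact if and only if X is not projective. -/
/-- `0 → X → Y → Z → 0` is a short exact sequence of right `A`-modules
(right `A`-modules are modules over `Aᵐᵒᵖ`). -/
def IsShortExactSeq (A : Type) [Ring A] {X Y Z : Type}
    [AddCommGroup X] [AddCommGroup Y] [AddCommGroup Z]
    [Module Aᵐᵒᵖ X] [Module Aᵐᵒᵖ Y] [Module Aᵐᵒᵖ Z]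
    (f : X →ₗ[Aᵐᵒᵖ] Y) (g : Y →ₗ[Aᵐᵒᵖ] Z) : Prop :=
  Function.Injective f ∧ Function.Exact f g ∧ Function.Surjective g

/-- A short exact sequence `0 → X → Y → Z → 0` of right `A`-modules is perfect exact
if the induced sequence `0 → Hom_A(Z,A) → Hom_A(Y,A) → Hom_A(X,A) → 0` is exact. -/
def IsPerfectExactSeq (A : Type) [Ring A] {X Y Z : Type}
    [AddCommGroup X] [AddCommGroup Y] [AddCommGroup Z]
    [Module Aᵐᵒᵖ X] [Module Aᵐᵒᵖ Y] [Module Aᵐᵒᵖ Z]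
    (f : X →ₗ[Aᵐᵒᵖ] Y) (g : Y →ₗ[Aᵐᵒᵖ] Z) : Prop :=
  IsShortExactSeq A f g ∧
  Function.Injective (fun φ : Z →ₗ[Aᵐᵒᵖ] A => φ.comp g) ∧
  Function.Exact (fun φ : Z →ₗ[Aᵐᵒᵖ] A => φ.comp g) (fun φ : Y →ₗ[Aᵐᵒᵖ] A => φ.comp f) ∧
  Function.Surjective (fun φ : Y →ₗ[Aᵐᵒᵖ] A => φ.comp f)

/-- `0 → X → E → Z → 0` is an almost split sequence of (finitely generated) right
`A`-modules: it is a non-split short exact sequence, `X` and `Z` are indecomposable,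
`f` is left almost split and `g` is right almost split. -/
def IsAlmostSplitSeq (A : Type) [Ring A] {X E Z : Type}
    [AddCommGroup X] [AddCommGroup E] [AddCommGroup Z]
    [Module Aᵐᵒᵖ X] [Module Aᵐᵒᵖ E] [Module Aᵐᵒᵖ Z]
    (f : X →ₗ[Aᵐᵒᵖ] E) (g : E →ₗ[Aᵐᵒᵖ] Z) : Prop :=
  IsShortExactSeq A f g ∧
  -- the sequence does not split
  (¬ ∃ s : Z →ₗ[Aᵐᵒᵖ] E, g.comp s = LinearMap.id) ∧
  -- `X` is indecomposable
  (Nontrivial X ∧ ∀ N N' : Submodule Aᵐᵒᵖ X, IsCompl N N' → N = ⊥ ∨ N' = ⊥) ∧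
  -- `Z` is indecomposable
  (Nontrivial Z ∧ ∀ N N' : Submodule Aᵐᵒᵖ Z, IsCompl N N' → N = ⊥ ∨ N' = ⊥) ∧
  -- `f` is left almost split: every `u : X → W` which is not a split monomorphism
  -- factors through `f`
  (∀ (W : Type) [AddCommGroup W] [Module Aᵐᵒᵖ W] [Module.Finite Aᵐᵒᵖ W]
    (u : X →ₗ[Aᵐᵒᵖ] W), (¬ ∃ r : W →ₗ[Aᵐᵒᵖ] X, r.comp u = LinearMap.id) →
      ∃ h : E →ₗ[Aᵐᵒᵖ] W, h.comp f = u) ∧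
  -- `g` is right almost split: every `u : W → Z` which is not a split epimorphism
  -- factors through `g`
  (∀ (W : Type) [AddCommGroup W] [Module Aᵐᵒᵖ W] [Module.Finite Aᵐᵒᵖ W]
    (u : W →ₗ[Aᵐᵒᵖ] Z), (¬ ∃ s : Z →ₗ[Aᵐᵒᵖ] W, u.comp s = LinearMap.id) →
      ∃ h : W →ₗ[Aᵐᵒᵖ] E, g.comp h = u)


private def unopEquiv (A : Type) [Ring A] : Aᵐᵒᵖ ≃ₗ[Aᵐᵒᵖ] A where
  toFun := MulOpposite.unop
  map_add' := fun _ _ => rfl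
  map_smul' := fun c m => by
    simp [MulOpposite.smul_eq_mul_unop, smul_eq_mul, MulOpposite.unop_mul]
  invFun := MulOpposite.op
  left_inv := fun _ => rfl
  right_inv := fun _ => rfl

section Aux

/-- A linear map vanishing on the image of `f` factors through the cokernel `Z`. -/
private lemma factor_thru {R X E Z W : Type} [Ring R] [AddCommGroup X] [AddCommGroup E]
    [AddCommGroup Z] [AddCommGroup W] [Module R X] [Module R E] [Module R Z] [Module R W]
    (f : X →ₗ[R] E) (g : E →ₗ[R] Z) (hex : Function.Exact f g) (hs : Function.Surjective g)
    (ψ : E →ₗ[R] W) (h : ψ.comp f = 0) : ∃ φ : Z →ₗ[R] W, φ.comp g = ψ := by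
  have hle : LinearMap.ker g ≤ LinearMap.ker ψ := by
    intro x hx
    obtain ⟨y, hy⟩ := (hex x).1 hx
    have : ψ (f y) = 0 := by
      rw [← LinearMap.comp_apply, h]; rfl
    simpa [LinearMap.mem_ker, hy] using this
  refine ⟨((LinearMap.ker g).liftQ ψ hle).comp
    (g.quotKerEquivOfSurjective hs).symm.toLinearMap, ?_⟩
  ext x
  have hmk : (g.quotKerEquivOfSurjective hs).symm (g x) = Submodule.Quotient.mk x := by
    apply (g.quotKerEquivOfSurjective hs).injective
    simp [LinearMap.quotKerEquivOfSurjective]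
  simp [hmk]

/-- If `f` is a split mono in a short exact sequence, then `g` is a split epi. -/
private lemma split_of_retraction {R X E Z : Type} [Ring R] [AddCommGroup X] [AddCommGroup E]
    [AddCommGroup Z] [Module R X] [Module R E] [Module R Z]
    (f : X →ₗ[R] E) (g : E →ₗ[R] Z) (hex : Function.Exact f g) (hs : Function.Surjective g)
    (r : E →ₗ[R] X) (hr : r.comp f = LinearMap.id) :
    ∃ s : Z →ₗ[R] E, g.comp s = LinearMap.id := by
  have h0 : (LinearMap.id - f.comp r).comp f = 0 := by
    ext x
    simp only [LinearMap.comp_apply, LinearMap.sub_apply, LinearMap.id_apply, LinearMap.zero_apply]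
    have : r (f x) = x := congrArg (fun m => m x) hr
    simp [this]
  obtain ⟨t, ht⟩ := factor_thru f g hex hs _ h0
  refine ⟨t, ?_⟩
  ext z
  obtain ⟨e, rfl⟩ := hs z
  have h1 : t (g e) = e - f (r e) := congrArg (fun m => m e) ht
  have h2 : g (f (r e)) = 0 := hex.apply_apply_eq_zero (r e)
  simp [h1, h2]

end Aux

/-- An almost split sequence `0 → X → E → Z → 0` of finitely generated right `A`-modules
over a finite dimensional `k`-algebra `A` is perfect exact if and only if `X` is not
projective. -/


theorem almostSplitSeq_isPerfectExactSeq_iff_not_projective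
    (k A : Type) [Field k] [Ring A] [Algebra k A] [FiniteDimensional k A]
    (X E Z : Type) [AddCommGroup X] [AddCommGroup E] [AddCommGroup Z]
    [Module Aᵐᵒᵖ X] [Module Aᵐᵒᵖ E] [Module Aᵐᵒᵖ Z]
    [Module.Finite Aᵐᵒᵖ X] [Module.Finite Aᵐᵒᵖ E] [Module.Finite Aᵐᵒᵖ Z]
    (f : X →ₗ[Aᵐᵒᵖ] E) (g : E →ₗ[Aᵐᵒᵖ] Z)
    (hass : IsAlmostSplitSeq A f g) :
    IsPerfectExactSeq A f g ↔ ¬ Module.Projective Aᵐᵒᵖ X := by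
  obtain ⟨⟨hinj, hex, hsurj⟩, hnsplit, hXind, hZind, hleft, hright⟩ := hass
  haveI hAfin : Module.Finite Aᵐᵒᵖ A := Module.Finite.equiv (unopEquiv A)
  haveI hAproj : Module.Projective Aᵐᵒᵖ A := Module.Projective.of_equiv (unopEquiv A)
  constructor
  · rintro ⟨-, -, -, hsurjHom⟩ hproj
    obtain ⟨n, σ, hσ⟩ := Module.Finite.exists_fin' Aᵐᵒᵖ X
    obtain ⟨s, hsX⟩ := Module.projective_lifting_property σ LinearMap.id hσ
    choose h hh using fun j : Fin n =>
      hsurjHom ((unopEquiv A).toLinearMap.comp ((LinearMap.proj j).comp s))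
    set H : E →ₗ[Aᵐᵒᵖ] (Fin n → Aᵐᵒᵖ) :=
      LinearMap.pi fun j => (unopEquiv A).symm.toLinearMap.comp (h j) with hH
    have hHf : H.comp f = s := by
      ext x j
      have h1 : (h j).comp f = (unopEquiv A).toLinearMap.comp ((LinearMap.proj j).comp s) := hh j
      have h2 : (h j) (f x) = (unopEquiv A) (s x j) := by
        have := congrArg (fun m => m x) h1
        simpa using this
      simp [hH, LinearMap.pi_apply, h2]
    have hret : (σ.comp H).comp f = LinearMap.id := by
      rw [LinearMap.comp_assoc, hHf, hsX]
    obtain ⟨s', hs'⟩ := split_of_retraction f g hex hsurj _ hret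
    exact hnsplit ⟨s', hs'⟩
  · intro hnproj
    refine ⟨⟨hinj, hex, hsurj⟩, ?_, ?_, ?_⟩
    · intro φ₁ φ₂ hφ
      ext z
      obtain ⟨e, rfl⟩ := hsurj z
      exact congrArg (fun m => m e) hφ
    · intro ψ
      constructor
      · intro hψ0
        exact factor_thru f g hex hsurj ψ hψ0
      · rintro ⟨φ, rfl⟩
        ext x
        simp [hex.apply_apply_eq_zero]
    · intro φ
      by_cases hsplit : ∃ r : A →ₗ[Aᵐᵒᵖ] X, r.comp φ = LinearMap.id
      · obtain ⟨r, hr⟩ := hsplit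
        exact absurd (Module.Projective.of_split φ r hr) hnproj
      · exact hleft A φ hsplit
end

section
/- Assume that there exists a finitely generated right A-module Q that is both projective and injective together with an injective A-linear map A → Q (i.e., the dominant dimension of A is at least 1). Let Y be a finitely generated right A-module such that Hom_A(Y,Z) = 0 for every finitely generated right A-module Z that is both projective and injective, and let Y' be a submodule of Y. Then Hom_A(Y',A) = 0, and every short exact sequence 0 → X → Y' → Z → 0 of finitely generated right A-modules with middle term Y' is perfect exact. -/
/-- Suppose `A` (a finite dimensional `k`-algebra) has dominant dimension at least `1`,
i.e. there is a finitely generated projective-injective right `A`-module `Q` and an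
injective `A`-linear map `A → Q`.  If `Y` is a finitely generated right `A`-module with
`Hom_A(Y,Z) = 0` for every finitely generated projective-injective right `A`-module `Z`,
and `Y'` is a submodule of `Y`, then `Hom_A(Y',A) = 0` and every short exact sequence
`0 → X → Y' → Z → 0` of finitely generated right `A`-modules is perfect exact. -/
theorem hom_eq_zero_and_sesFromSubmodule_perfectExact_of_domdim_ge_one
    (k A : Type) [Field k] [Ring A] [Algebra k A] [FiniteDimensional k A]
    -- dominant dimension at least 1 :
    (Q : Type) [AddCommGroup Q] [Module Aᵐᵒᵖ Q] [Module.Finite Aᵐᵒᵖ Q]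
    (hQproj : Module.Projective Aᵐᵒᵖ Q) (hQinj : Module.Injective Aᵐᵒᵖ Q)
    (i : A →ₗ[Aᵐᵒᵖ] Q) (hi : Function.Injective i)
    -- `Y` with `Hom_A(Y,Z) = 0` for all finitely generated projective-injective `Z` :
    (Y : Type) [AddCommGroup Y] [Module Aᵐᵒᵖ Y] [Module.Finite Aᵐᵒᵖ Y]
    (hY : ∀ (Z : Type) [AddCommGroup Z] [Module Aᵐᵒᵖ Z] [Module.Finite Aᵐᵒᵖ Z],
      Module.Projective Aᵐᵒᵖ Z → Module.Injective Aᵐᵒᵖ Z →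
      ∀ φ : Y →ₗ[Aᵐᵒᵖ] Z, φ = 0)
    -- a submodule `Y'` of `Y` :
    (Y' : Submodule Aᵐᵒᵖ Y) :
    (∀ φ : Y' →ₗ[Aᵐᵒᵖ] A, φ = 0) ∧
    (∀ (X Z : Type) [AddCommGroup X] [AddCommGroup Z] [Module Aᵐᵒᵖ X] [Module Aᵐᵒᵖ Z]
      [Module.Finite Aᵐᵒᵖ X] [Module.Finite Aᵐᵒᵖ Z]
      (f : X →ₗ[Aᵐᵒᵖ] Y') (g : Y' →ₗ[Aᵐᵒᵖ] Z),
      IsShortExactSeq A f g → IsPerfectExactSeq A f g) := by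
  have key : ∀ (X : Type) [AddCommGroup X] [Module Aᵐᵒᵖ X]
      (j : X →ₗ[Aᵐᵒᵖ] Y) (hj : Function.Injective j) (ψ : X →ₗ[Aᵐᵒᵖ] A), ψ = 0 := by
    intro X _ _ j hj ψ
    obtain ⟨h, hh⟩ := hQinj.out j hj (i.comp ψ)
    have h0 : h = 0 := hY Q hQproj hQinj h
    ext x
    apply hi
    have := hh x
    rw [h0] at this
    simpa using this.symm
  have part1 : ∀ φ : Y' →ₗ[Aᵐᵒᵖ] A, φ = 0 :=
    fun φ => key Y' Y'.subtype Subtype.val_injective φ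
  refine ⟨part1, ?_⟩
  intro X Z _ _ _ _ _ _ f g hses
  obtain ⟨hf, hexact, hg⟩ := hses
  have hZ : ∀ φ : Z →ₗ[Aᵐᵒᵖ] A, φ = 0 := by
    intro φ
    ext z
    obtain ⟨y, rfl⟩ := hg z
    have : φ.comp g = 0 := part1 _
    simpa using LinearMap.ext_iff.mp this y
  have hX : ∀ ψ : X →ₗ[Aᵐᵒᵖ] A, ψ = 0 :=
    fun ψ => key X (Y'.subtype.comp f) (Subtype.val_injective.comp hf) ψ
  refine ⟨⟨hf, hexact, hg⟩, ?_, ?_, ?_⟩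
  · intro φ₁ φ₂ _
    rw [hZ φ₁, hZ φ₂]
  · intro φ
    constructor
    · intro _
      exact ⟨0, by simp [part1 φ]⟩
    · intro _
      show φ.comp f = 0
      exact hX _
  · intro ψ
    exact ⟨0, by simp [hX ψ]⟩
end

section
/- Let 0 → X →f Y →g Z → 0 and 0 → X →u U →v V → 0 be short exact sequences of finitely generated right A-modules, and let α : U → Y be a homomorphism with f = α ∘ u. Then there exists a homomorphism β : V → Z such that the sequence 0 → U → Y ⊕ V → Z → 0 is exact, where the first map sends x to (α(x), v(x)) and the second map sends (y, w) to g(y) + β(w). Moreover, if both given short exact sequences are perfect exact, then so is this new sequence. -/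
/-- Pushout construction: given short exact sequences `0 → X →f Y →g Z → 0` and
`0 → X →u U →v V → 0` of finitely generated right `A`-modules and `α : U → Y` with
`f = α ∘ u`, there is `β : V → Z` such that
`0 → U → Y ⊕ V → Z → 0`, with maps `x ↦ (α x, v x)` and `(y, w) ↦ g y + β w`,
is a short exact sequence; moreover if the two given sequences are perfect exact,
then so is the new one. -/
theorem perfectExactSeq_pushout
    (k A : Type) [Field k] [Ring A] [Algebra k A] [FiniteDimensional k A]
    (X Y Z U V : Type)
    [AddCommGroup X] [AddCommGroup Y] [AddCommGroup Z] [AddCommGroup U] [AddCommGroup V]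
    [Module Aᵐᵒᵖ X] [Module Aᵐᵒᵖ Y] [Module Aᵐᵒᵖ Z] [Module Aᵐᵒᵖ U] [Module Aᵐᵒᵖ V]
    [Module.Finite Aᵐᵒᵖ X] [Module.Finite Aᵐᵒᵖ Y] [Module.Finite Aᵐᵒᵖ Z]
    [Module.Finite Aᵐᵒᵖ U] [Module.Finite Aᵐᵒᵖ V]
    (f : X →ₗ[Aᵐᵒᵖ] Y) (g : Y →ₗ[Aᵐᵒᵖ] Z) (u : X →ₗ[Aᵐᵒᵖ] U) (v : U →ₗ[Aᵐᵒᵖ] V)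
    (α : U →ₗ[Aᵐᵒᵖ] Y)
    (hfg : IsShortExactSeq A f g) (huv : IsShortExactSeq A u v)
    (hα : α.comp u = f) :
    ∃ β : V →ₗ[Aᵐᵒᵖ] Z,
      IsShortExactSeq A (α.prod v) (g.coprod β) ∧
      (IsPerfectExactSeq A f g → IsPerfectExactSeq A u v →
        IsPerfectExactSeq A (α.prod v) (g.coprod β)) := by
  
  obtain ⟨hf_inj, hfg_ex, hg_surj⟩ := hfg
  obtain ⟨hu_inj, huv_ex, hv_surj⟩ := huv
  have hαu : ∀ x, α (u x) = f x := fun x => congrFun (congrArg DFunLike.coe hα) x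
  have hker : LinearMap.ker v ≤ LinearMap.ker (-(g.comp α)) := by
    intro x hx
    obtain ⟨x₀, hx₀⟩ := (huv_ex x).mp hx
    simp only [LinearMap.mem_ker, LinearMap.neg_apply, LinearMap.comp_apply, neg_eq_zero,
      ← hx₀, hαu]
    exact hfg_ex.apply_apply_eq_zero x₀
  set e := v.quotKerEquivOfSurjective hv_surj with he
  set β : V →ₗ[Aᵐᵒᵖ] Z :=
    ((LinearMap.ker v).liftQ (-(g.comp α)) hker).comp e.symm.toLinearMap with hβ
  have hβv : ∀ x, β (v x) = -(g (α x)) := by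
    intro x
    have h1 : e (Submodule.Quotient.mk x) = v x := rfl
    have h2 : e.symm (v x) = Submodule.Quotient.mk x := by
      rw [LinearEquiv.symm_apply_eq, h1]
    simp [hβ, h2]
  have hses : IsShortExactSeq A (α.prod v) (g.coprod β) := by
    refine ⟨?_, ?_, ?_⟩
    · intro x₁ x₂ h
      have h1 : α x₁ = α x₂ := congrArg Prod.fst h
      have h2 : v x₁ = v x₂ := congrArg Prod.snd h
      have hv0 : v (x₁ - x₂) = 0 := by simp [h2]
      obtain ⟨x₀, hx₀⟩ := (huv_ex _).mp hv0
      have hf0 : f x₀ = 0 := by rw [← hαu, hx₀]; simp [h1]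
      have hx0 : x₀ = 0 := hf_inj (by simpa using hf0)
      have : x₁ - x₂ = 0 := by rw [← hx₀, hx0, map_zero]
      exact sub_eq_zero.mp this
    · rintro ⟨y, w⟩
      constructor
      · intro hp
        have hp' : g y + β w = 0 := hp
        obtain ⟨x, hx⟩ := hv_surj w
        have hgy : g y = g (α x) := by
          rw [← hx, hβv x, add_neg_eq_zero] at hp'
          exact hp'
        have hgz : g (y - α x) = 0 := by rw [map_sub, hgy, sub_self]
        obtain ⟨x₀, hx₀⟩ := (hfg_ex _).mp hgz
        refine ⟨x + u x₀, ?_⟩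
        have hα2 : α (x + u x₀) = y := by
          rw [map_add, hαu, hx₀]; abel
        have hv2 : v (x + u x₀) = w := by
          rw [map_add, huv_ex.apply_apply_eq_zero x₀, add_zero, hx]
        simp [LinearMap.prod_apply, hα2, hv2]
      · rintro ⟨x, hx⟩
        rw [← hx]
        show g (α x) + β (v x) = 0
        rw [hβv]; abel
    · intro z
      obtain ⟨y, hy⟩ := hg_surj z
      exact ⟨(y, 0), by simp [hy]⟩
  refine ⟨β, hses, ?_⟩
  rintro ⟨-, hg_dinj, hfg_dex, hf_dsur⟩ ⟨-, hv_dinj, huv_dex, hu_dsur⟩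
  refine ⟨hses, ?_, ?_, ?_⟩
  · -- injectivity of dual of coprod (follows from surjectivity of coprod)
    intro φ₁ φ₂ h
    ext z
    obtain ⟨p, hp⟩ := hses.2.2 z
    have := congrFun (congrArg DFunLike.coe h) p
    simpa [hp] using this
  · -- exactness in the middle of the dual sequence
    intro lam
    constructor
    · intro hlam
      set lam1 : Y →ₗ[Aᵐᵒᵖ] A := lam.comp (LinearMap.inl Aᵐᵒᵖ Y V) with hl1
      set lam2 : V →ₗ[Aᵐᵒᵖ] A := lam.comp (LinearMap.inr Aᵐᵒᵖ Y V) with hl2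
      have hlamsum : ∀ y w, lam (y, w) = lam1 y + lam2 w := by
        intro y w
        have : (y, w) = ((y, 0) : Y × V) + (0, w) := by simp
        rw [this, map_add]; rfl
      have hcomp : ∀ x : U, lam1 (α x) + lam2 (v x) = 0 := by
        intro x
        have := congrFun (congrArg DFunLike.coe hlam) x
        simpa [LinearMap.comp_apply, LinearMap.prod_apply, hlamsum] using this
      have hl1f : lam1.comp f = 0 := by
        ext x
        have h1 := hcomp (u x)
        rw [hαu, huv_ex.apply_apply_eq_zero x, map_zero, add_zero] at h1
        simpa using h1
      obtain ⟨φ, hφ⟩ : ∃ φ : Z →ₗ[Aᵐᵒᵖ] A, φ.comp g = lam1 := by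
        have := (hfg_dex lam1).mp (by simpa using hl1f)
        exact this
      refine ⟨φ, ?_⟩
      have hφβ : φ.comp β = lam2 := by
        ext w
        obtain ⟨x, hx⟩ := hv_surj w
        have hφg : φ (g (α x)) = lam1 (α x) := congrFun (congrArg DFunLike.coe hφ) (α x)
        have := hcomp x
        rw [← hx]
        simp only [LinearMap.comp_apply, hβv x, map_neg, hφg]
        exact neg_eq_of_add_eq_zero_right this
      apply LinearMap.ext
      rintro ⟨y, w⟩
      have hφg : φ (g y) = lam1 y := congrFun (congrArg DFunLike.coe hφ) y
      have hφb : φ (β w) = lam2 w := congrFun (congrArg DFunLike.coe hφβ) w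
      show φ (g y + β w) = lam (y, w)
      rw [map_add, hφg, hφb, hlamsum]
    · rintro ⟨φ, hφ⟩
      rw [← hφ]
      apply LinearMap.ext
      intro x
      show φ (g (α x) + β (v x)) = 0
      rw [hβv]
      simp
  · -- surjectivity of dual of prod
    intro ψ
    obtain ⟨ρ, hρ⟩ := hf_dsur (ψ.comp u)
    have hmid : (ψ - ρ.comp α).comp u = 0 := by
      ext x
      have h1 : ρ (f x) = ψ (u x) := congrFun (congrArg DFunLike.coe hρ) x
      simp [LinearMap.comp_apply, hαu, h1]
    obtain ⟨σ, hσ⟩ : ∃ σ : V →ₗ[Aᵐᵒᵖ] A, σ.comp v = ψ - ρ.comp α := by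
      have := (huv_dex (ψ - ρ.comp α)).mp (by simpa using hmid)
      exact this
    refine ⟨ρ.coprod σ, ?_⟩
    ext x
    have hσx : σ (v x) = (ψ - ρ.comp α) x := congrFun (congrArg DFunLike.coe hσ) x
    simp only [LinearMap.comp_apply, LinearMap.prod_apply, LinearMap.coprod_apply, Pi.prod, Function.prod,
      hσx, LinearMap.sub_apply]
    abel
end

section
/- Let 0 → X →f Y →g Z → 0 and 0 → U →u V →v Z → 0 be short exact sequences of finitely generated right A-modules, and let α : Y → V be a homomorphism with g = v ∘ α. Then there exists a homomorphism β : X → U such that the sequence 0 → X → U ⊕ Y → V → 0 is exact, where the first map sends x to (β(x), f(x)) and the second map sends (w, y) to u(w) + α(y). Moreover, if both given short exact sequences are perfect exact, then so is this new sequence. -/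
/-- Pullback construction: given short exact sequences `0 → X →f Y →g Z → 0` and
`0 → U →u V →v Z → 0` of finitely generated right `A`-modules and `α : Y → V` with
`g = v ∘ α`, there is `β : X → U` such that
`0 → X → U ⊕ Y → V → 0`, with maps `x ↦ (β x, f x)` and `(w, y) ↦ u w + α y`,
is a short exact sequence; moreover if the two given sequences are perfect exact,
then so is the new one. -/
theorem perfectExactSeq_pullback
    (k A : Type) [Field k] [Ring A] [Algebra k A] [FiniteDimensional k A]
    (X Y Z U V : Type)
    [AddCommGroup X] [AddCommGroup Y] [AddCommGroup Z] [AddCommGroup U] [AddCommGroup V]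
    [Module Aᵐᵒᵖ X] [Module Aᵐᵒᵖ Y] [Module Aᵐᵒᵖ Z] [Module Aᵐᵒᵖ U] [Module Aᵐᵒᵖ V]
    [Module.Finite Aᵐᵒᵖ X] [Module.Finite Aᵐᵒᵖ Y] [Module.Finite Aᵐᵒᵖ Z]
    [Module.Finite Aᵐᵒᵖ U] [Module.Finite Aᵐᵒᵖ V]
    (f : X →ₗ[Aᵐᵒᵖ] Y) (g : Y →ₗ[Aᵐᵒᵖ] Z) (u : U →ₗ[Aᵐᵒᵖ] V) (v : V →ₗ[Aᵐᵒᵖ] Z)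
    (α : Y →ₗ[Aᵐᵒᵖ] V)
    (hfg : IsShortExactSeq A f g) (huv : IsShortExactSeq A u v)
    (hα : v.comp α = g) :
    ∃ β : X →ₗ[Aᵐᵒᵖ] U,
      IsShortExactSeq A (β.prod f) (u.coprod α) ∧
      (IsPerfectExactSeq A f g → IsPerfectExactSeq A u v →
        IsPerfectExactSeq A (β.prod f) (u.coprod α)) := by
  obtain ⟨hf, hfg_ex, hg⟩ := hfg
  obtain ⟨hu, huv_ex, hv⟩ := huv
  have hgf : ∀ x, g (f x) = 0 := fun x => hfg_ex.apply_apply_eq_zero x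
  have hvu : ∀ w, v (u w) = 0 := fun w => huv_ex.apply_apply_eq_zero w
  have hvα : ∀ y, v (α y) = g y := fun y => LinearMap.congr_fun hα y
  have hmem : ∀ x, (α.comp f) x ∈ LinearMap.range u := by
    intro x
    have h0 : v (α (f x)) = 0 := by rw [hvα, hgf]
    simpa using (huv_ex (α (f x))).mp h0
  set e : U ≃ₗ[Aᵐᵒᵖ] LinearMap.range u := LinearEquiv.ofInjective u hu with he
  set β : X →ₗ[Aᵐᵒᵖ] U :=
    -((e.symm : LinearMap.range u →ₗ[Aᵐᵒᵖ] U).comp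
        ((α.comp f).codRestrict (LinearMap.range u) hmem)) with hβ
  have huβ : ∀ x, u (β x) = -α (f x) := by
    intro x
    have h1 : u (e.symm ⟨α (f x), hmem x⟩) = α (f x) := by
      have h2 := e.apply_symm_apply ⟨α (f x), hmem x⟩
      have h3 : ((e (e.symm ⟨α (f x), hmem x⟩)) : V) = u (e.symm ⟨α (f x), hmem x⟩) :=
        LinearEquiv.ofInjective_apply u _
      rw [h2] at h3
      exact h3.symm
    simp only [hβ, LinearMap.neg_apply, LinearMap.coe_comp, Function.comp_apply,
      LinearMap.codRestrict_apply, map_neg]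
    show -u (e.symm ⟨α (f x), hmem x⟩) = -α (f x)
    rw [h1]
  -- composition is zero
  have hcomp : ∀ x, u (β x) + α (f x) = 0 := by intro x; rw [huβ]; abel
  -- short exactness
  have hSES : IsShortExactSeq A (β.prod f) (u.coprod α) := by
    refine ⟨?_, ?_, ?_⟩
    · intro x₁ x₂ h
      exact hf (congrArg Prod.snd h)
    · intro p
      constructor
      · intro hp
        obtain ⟨w, y⟩ := p
        have hp' : u w + α y = 0 := hp
        have hgy : g y = 0 := by
          have := congrArg v hp'
          simpa [hvu, hvα] using this
        obtain ⟨x, hx⟩ := (hfg_ex y).mp hgy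
        have hux : u w = u (β x) := by
          have := huβ x
          rw [hx] at this
          rw [this]
          have : α y = -u w := by linear_combination (norm := abel) hp'
          rw [this]; abel
        have hw : w = β x := hu hux
        exact ⟨x, by simp [LinearMap.prod_apply, hx, ← hw]⟩
      · rintro ⟨x, rfl⟩
        exact hcomp x
    · intro p
      obtain ⟨y, hy⟩ := hg (v p)
      have : v (p - α y) = 0 := by simp [hvα, hy]
      obtain ⟨w, hw⟩ := (huv_ex (p - α y)).mp this
      exact ⟨(w, y), by simp [LinearMap.coprod_apply, hw]⟩
  refine ⟨β, hSES, ?_⟩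
  rintro ⟨-, hinj1, hex1, hsurj1⟩ ⟨-, hinj2, hex2, hsurj2⟩
  refine ⟨hSES, ?_, ?_, ?_⟩
  · -- injectivity of φ ↦ φ ∘ coprod
    intro φ₁ φ₂ h
    ext p
    obtain ⟨q, rfl⟩ := hSES.2.2 p
    exact LinearMap.congr_fun h q
  · -- exactness at middle
    intro ψ
    constructor
    · intro hψ
      -- ψ : U × Y →ₗ A with ψ ∘ (β.prod f) = 0
      set ψ₁ : U →ₗ[Aᵐᵒᵖ] A := ψ.comp (LinearMap.inl Aᵐᵒᵖ U Y) with hψ₁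
      set ψ₂ : Y →ₗ[Aᵐᵒᵖ] A := ψ.comp (LinearMap.inr Aᵐᵒᵖ U Y) with hψ₂
      have hψval : ∀ w y, ψ (w, y) = ψ₁ w + ψ₂ y := by
        intro w y
        have : ((w, y) : U × Y) = (w, 0) + (0, y) := by simp
        rw [this, map_add]; rfl
      have hker : ∀ x, ψ₁ (β x) + ψ₂ (f x) = 0 := by
        intro x
        have := LinearMap.congr_fun hψ x
        simpa [LinearMap.prod_apply, hψval] using this
      obtain ⟨φ₀, hφ₀⟩ := hsurj2 ψ₁
      have hφ₀' : ∀ w, φ₀ (u w) = ψ₁ w := fun w => LinearMap.congr_fun hφ₀ w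
      have hzero : (ψ₂ - φ₀.comp α).comp f = 0 := by
        ext x
        have h1 : φ₀ (α (f x)) = -ψ₁ (β x) := by
          have h2 : α (f x) = -u (β x) := by rw [huβ x]; abel
          rw [h2, map_neg, hφ₀']
        simp only [LinearMap.coe_comp, Function.comp_apply, LinearMap.sub_apply,
          LinearMap.zero_apply]
        rw [h1]
        linear_combination (norm := abel) hker x
      obtain ⟨θ, hθ⟩ := (hex1 (ψ₂ - φ₀.comp α)).mp hzero
      refine ⟨φ₀ + θ.comp v, ?_⟩
      refine LinearMap.ext fun p => ?_
      obtain ⟨w, y⟩ := p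
      simp only [LinearMap.coe_comp, Function.comp_apply, LinearMap.coprod_apply,
        LinearMap.add_apply, map_add]
      have hθ' : ∀ y, θ (g y) = ψ₂ y - φ₀ (α y) := fun y => LinearMap.congr_fun hθ y
      rw [hψval w y, hvu, hvα, map_zero, hθ' y, hφ₀' w]
      abel
    · rintro ⟨φ, rfl⟩
      ext x
      simp only [LinearMap.coe_comp, Function.comp_apply, LinearMap.prod_apply,
        LinearMap.coprod_apply, LinearMap.zero_apply, Function.prod]
      rw [hcomp x, map_zero]
  · -- surjectivity
    intro χ
    obtain ⟨φ, hφ⟩ := hsurj1 χ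
    refine ⟨LinearMap.coprod 0 φ, ?_⟩
    ext x
    simpa using LinearMap.congr_fun hφ x
end

section
/- Let X, U, P, V, Y, Z be finitely generated right A-modules and let s : X → U, ι : X → P, t : U → V, π : P → V, v : U → Y, g : Y → Z, w : V → Z be homomorphisms such that the sequences 0 → X → U ⊕ P → V → 0 (first map x ↦ (s(x), ι(x)), second map (u, p) ↦ t(u) + π(p)) and 0 → U → Y ⊕ V → Z → 0 (first map u ↦ (v(u), t(u)), second map (y, v') ↦ g(y) + w(v')) are exact. Then the sequence 0 → X → Y ⊕ P → Z → 0 with first map x ↦ (v(s(x)), ι(x)) and second map (y, p) ↦ g(y) − w(π(p)) is exact. Moreover, if both given short exact sequences are perfect exact, then so is this new sequence. -/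
/-- Decomposition of a linear map on a product. -/
lemma pair_decomp {R M N B : Type} [Ring R] [AddCommGroup M] [AddCommGroup N]
    [AddCommGroup B] [Module R M] [Module R N] [Module R B]
    (f : M × N →ₗ[R] B) (m : M) (n : N) :
    f (m, n) = f (m, 0) + f (0, n) := by
  rw [← map_add]
  simp

/-- Snake construction: given short exact sequences
`0 → X → U ⊕ P → V → 0` (maps `x ↦ (s x, ι x)` and `(u, p) ↦ t u + π p`) and
`0 → U → Y ⊕ V → Z → 0` (maps `u ↦ (v u, t u)` and `(y, v') ↦ g y + w v'`)
of finitely generated right `A`-modules, the sequence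
`0 → X → Y ⊕ P → Z → 0` with maps `x ↦ (v (s x), ι x)` and `(y, p) ↦ g y - w (π p)`
is short exact; moreover if the two given sequences are perfect exact,
then so is the new one. -/
theorem perfectExactSeq_snake_fst
    (k A : Type) [Field k] [Ring A] [Algebra k A] [FiniteDimensional k A]
    (X U P V Y Z : Type)
    [AddCommGroup X] [AddCommGroup U] [AddCommGroup P] [AddCommGroup V]
    [AddCommGroup Y] [AddCommGroup Z]
    [Module Aᵐᵒᵖ X] [Module Aᵐᵒᵖ U] [Module Aᵐᵒᵖ P] [Module Aᵐᵒᵖ V]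
    [Module Aᵐᵒᵖ Y] [Module Aᵐᵒᵖ Z]
    [Module.Finite Aᵐᵒᵖ X] [Module.Finite Aᵐᵒᵖ U] [Module.Finite Aᵐᵒᵖ P]
    [Module.Finite Aᵐᵒᵖ V] [Module.Finite Aᵐᵒᵖ Y] [Module.Finite Aᵐᵒᵖ Z]
    (s : X →ₗ[Aᵐᵒᵖ] U) (ι : X →ₗ[Aᵐᵒᵖ] P) (t : U →ₗ[Aᵐᵒᵖ] V) (π : P →ₗ[Aᵐᵒᵖ] V)
    (v : U →ₗ[Aᵐᵒᵖ] Y) (g : Y →ₗ[Aᵐᵒᵖ] Z) (w : V →ₗ[Aᵐᵒᵖ] Z)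
    (h₁ : IsShortExactSeq A (s.prod ι) (t.coprod π))
    (h₂ : IsShortExactSeq A (v.prod t) (g.coprod w)) :
    IsShortExactSeq A ((v.comp s).prod ι) (g.coprod (-(w.comp π))) ∧
    (IsPerfectExactSeq A (s.prod ι) (t.coprod π) →
      IsPerfectExactSeq A (v.prod t) (g.coprod w) →
      IsPerfectExactSeq A ((v.comp s).prod ι) (g.coprod (-(w.comp π)))) := by
  obtain ⟨h1i, h1e, h1s⟩ := h₁
  obtain ⟨h2i, h2e, h2s⟩ := h₂
  have comp1 : ∀ x : X, t (s x) + π (ι x) = 0 := fun x => (h1e _).mpr ⟨x, rfl⟩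
  have comp2 : ∀ u : U, g (v u) + w (t u) = 0 := fun u => (h2e _).mpr ⟨u, rfl⟩
  have pi_iota : ∀ x : X, π (ι x) = - t (s x) :=
    fun x => eq_neg_of_add_eq_zero_right (comp1 x)
  -- injectivity
  have hinj : Function.Injective ((v.comp s).prod ι) := by
    rw [injective_iff_map_eq_zero]
    intro x hx
    rw [Prod.ext_iff] at hx
    simp only [LinearMap.prod_apply, LinearMap.comp_apply, Function.prod, Prod.fst_zero,
      Prod.snd_zero] at hx
    obtain ⟨hx1, hx2⟩ := hx
    have hts : t (s x) = 0 := by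
      have h := comp1 x
      rw [hx2, map_zero, add_zero] at h
      exact h
    have hsx : s x = 0 := by
      apply (injective_iff_map_eq_zero (v.prod t)).mp h2i (s x)
      simp [LinearMap.prod_apply, hx1, hts, Prod.ext_iff]
    apply (injective_iff_map_eq_zero (s.prod ι)).mp h1i x
    simp [LinearMap.prod_apply, hsx, hx2, Prod.ext_iff]
  -- exactness in the middle
  have hex : Function.Exact ((v.comp s).prod ι) (g.coprod (-(w.comp π))) := by
    rintro ⟨y, p⟩
    constructor
    · intro h0
      simp only [LinearMap.coprod_apply, LinearMap.neg_apply, LinearMap.comp_apply] at h0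
      have h0' : (g.coprod w) (y, -π p) = 0 := by
        simp only [LinearMap.coprod_apply, map_neg]
        simpa using h0
      obtain ⟨u, hu⟩ := (h2e (y, -π p)).mp h0'
      rw [Prod.ext_iff] at hu
      simp only [LinearMap.prod_apply, Function.prod] at hu
      obtain ⟨hu1, hu2⟩ := hu
      have htp : (t.coprod π) (u, p) = 0 := by
        simp only [LinearMap.coprod_apply]
        rw [hu2]
        abel
      obtain ⟨x, hx⟩ := (h1e (u, p)).mp htp
      rw [Prod.ext_iff] at hx
      simp only [LinearMap.prod_apply, Function.prod] at hx
      refine ⟨x, ?_⟩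
      simp only [LinearMap.prod_apply, LinearMap.comp_apply, Function.prod]
      rw [Prod.ext_iff]
      exact ⟨by rw [hx.1, hu1], hx.2⟩
    · rintro ⟨x, hx⟩
      rw [Prod.ext_iff] at hx
      simp only [LinearMap.prod_apply, LinearMap.comp_apply, Function.prod] at hx
      simp only [LinearMap.coprod_apply, LinearMap.neg_apply, LinearMap.comp_apply]
      rw [← hx.1, ← hx.2, pi_iota, map_neg, neg_neg]
      exact comp2 (s x)
  -- surjectivity
  have hsur : Function.Surjective (g.coprod (-(w.comp π))) := by
    intro z
    obtain ⟨⟨y, v'⟩, hyv⟩ := h2s z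
    obtain ⟨⟨u, p⟩, hup⟩ := h1s v'
    simp only [LinearMap.coprod_apply] at hyv hup
    refine ⟨(y - v u, -p), ?_⟩
    simp only [LinearMap.coprod_apply, LinearMap.neg_apply, LinearMap.comp_apply,
      map_sub, map_neg, neg_neg]
    have hg : g (v u) = - w (t u) := eq_neg_of_add_eq_zero_left (comp2 u)
    rw [hg, ← hyv, ← hup, map_add]
    abel
  refine ⟨⟨hinj, hex, hsur⟩, ?_⟩
  rintro ⟨_, d1i, d1e, d1s⟩ ⟨_, d2i, d2e, d2s⟩
  refine ⟨⟨hinj, hex, hsur⟩, ?_, ?_, ?_⟩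
  · -- dual injectivity
    intro φ₁ φ₂ h
    ext z
    obtain ⟨yp, rfl⟩ := hsur z
    exact LinearMap.congr_fun h yp
  · -- dual exactness
    intro ψ
    constructor
    · intro h0
      set ψ₁ : Y →ₗ[Aᵐᵒᵖ] A := ψ.comp (LinearMap.inl Aᵐᵒᵖ Y P) with hψ₁
      set ψ₂ : P →ₗ[Aᵐᵒᵖ] A := ψ.comp (LinearMap.inr Aᵐᵒᵖ Y P) with hψ₂
      have hψ : ∀ (y : Y) (p : P), ψ (y, p) = ψ₁ y + ψ₂ p := by
        intro y p
        rw [hψ₁, hψ₂]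
        simp only [LinearMap.comp_apply, LinearMap.inl_apply, LinearMap.inr_apply]
        exact pair_decomp ψ y p
      have hχ : ((ψ₁.comp v).coprod ψ₂).comp (s.prod ι) = 0 := by
        ext x
        simp only [LinearMap.comp_apply, LinearMap.coprod_apply, LinearMap.prod_apply,
          Function.prod, LinearMap.zero_apply]
        rw [← hψ]
        exact LinearMap.congr_fun h0 x
      obtain ⟨lam, hlam⟩ := (d1e _).mp hχ
      have hlamt : ∀ u : U, lam (t u) = ψ₁ (v u) := by
        intro u
        have := LinearMap.congr_fun hlam (u, (0 : P))
        simpa using this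
      have hlamp : ∀ p : P, lam (π p) = ψ₂ p := by
        intro p
        have := LinearMap.congr_fun hlam ((0 : U), p)
        simpa using this
      have hμ : (ψ₁.coprod (-lam)).comp (v.prod t) = 0 := by
        ext u
        simp only [LinearMap.comp_apply, LinearMap.coprod_apply, LinearMap.prod_apply,
          Function.prod, LinearMap.neg_apply, LinearMap.zero_apply, hlamt]
        abel
      obtain ⟨φ, hφ⟩ := (d2e _).mp hμ
      have hφg : ∀ y : Y, φ (g y) = ψ₁ y := by
        intro y
        have := LinearMap.congr_fun hφ (y, (0 : V))
        simpa using this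
      have hφw : ∀ v' : V, φ (w v') = - lam v' := by
        intro v'
        have := LinearMap.congr_fun hφ ((0 : Y), v')
        simpa using this
      refine ⟨φ, ?_⟩
      apply LinearMap.ext
      rintro ⟨y, p⟩
      simp only [LinearMap.comp_apply, LinearMap.coprod_apply, LinearMap.neg_apply,
        map_add, map_neg, hφg, hφw, hlamp, hψ]
      abel
    · rintro ⟨φ, rfl⟩
      ext x
      simp only [LinearMap.comp_apply, LinearMap.coprod_apply, LinearMap.prod_apply,
        Function.prod, LinearMap.neg_apply, LinearMap.zero_apply]
      rw [pi_iota, map_neg, neg_neg, comp2 (s x), map_zero]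
  · -- dual surjectivity
    intro ξ
    obtain ⟨χ, hχ⟩ := d1s ξ
    obtain ⟨μ, hμ⟩ := d2s (χ.comp (LinearMap.inl Aᵐᵒᵖ U P))
    refine ⟨(μ.comp (LinearMap.inl Aᵐᵒᵖ Y V)).coprod
      (χ.comp (LinearMap.inr Aᵐᵒᵖ U P) - (μ.comp (LinearMap.inr Aᵐᵒᵖ Y V)).comp π), ?_⟩
    ext x
    have hμx := LinearMap.congr_fun hμ (s x)
    have hχx := LinearMap.congr_fun hχ x
    simp only [LinearMap.comp_apply, LinearMap.prod_apply, Function.prod,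
      LinearMap.inl_apply, LinearMap.inr_apply] at hμx hχx ⊢
    simp only [LinearMap.coprod_apply, LinearMap.sub_apply, LinearMap.comp_apply,
      LinearMap.inl_apply, LinearMap.inr_apply]
    rw [pi_iota, show ((0:Y), -(t (s x))) = -((((0:Y), t (s x))) : Y × V) by simp, map_neg, sub_neg_eq_add]
    rw [show (v (s x), t (s x)) = ((v (s x), (0:V)) + ((0:Y), t (s x))) by simp] at hμx
    rw [map_add] at hμx
    rw [show ((s x, ι x) : U × P) = ((s x, (0:P)) + ((0:U), ι x)) by simp] at hχx
    rw [map_add] at hχx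
    rw [← hχx, ← hμx]
    abel
end

section
/- Let U, V, P, Z, X, Y be finitely generated right A-modules and let s : U → V, ι : U → P, t : V → Z, π : P → Z, f : X → Y, v : X → U, w : Y → V be homomorphisms such that the sequences 0 → U → V ⊕ P → Z → 0 (first map u ↦ (s(u), ι(u)), second map (v', p) ↦ t(v') + π(p)) and 0 → X → Y ⊕ U → V → 0 (first map x ↦ (f(x), v(x)), second map (y, u) ↦ w(y) + s(u)) are exact. Then the sequence 0 → X → Y ⊕ P → Z → 0 with first map x ↦ (f(x), −ι(v(x))) and second map (y, p) ↦ t(w(y)) + π(p) is exact. Moreover, if both given short exact sequences are perfect exact, then so is this new sequence. -/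
/-- Snake construction: given short exact sequences
`0 → U → V ⊕ P → Z → 0` (maps `u ↦ (s u, ι u)` and `(v', p) ↦ t v' + π p`) and
`0 → X → Y ⊕ U → V → 0` (maps `x ↦ (f x, v x)` and `(y, u) ↦ w y + s u`)
of finitely generated right `A`-modules, the sequence
`0 → X → Y ⊕ P → Z → 0` with maps `x ↦ (f x, -ι (v x))` and `(y, p) ↦ t (w y) + π p`
is short exact; moreover if the two given sequences are perfect exact,
then so is the new one. -/
theorem perfectExactSeq_snake_snd
    (k A : Type) [Field k] [Ring A] [Algebra k A] [FiniteDimensional k A]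
    (U V P Z X Y : Type)
    [AddCommGroup U] [AddCommGroup V] [AddCommGroup P] [AddCommGroup Z]
    [AddCommGroup X] [AddCommGroup Y]
    [Module Aᵐᵒᵖ U] [Module Aᵐᵒᵖ V] [Module Aᵐᵒᵖ P] [Module Aᵐᵒᵖ Z]
    [Module Aᵐᵒᵖ X] [Module Aᵐᵒᵖ Y]
    [Module.Finite Aᵐᵒᵖ U] [Module.Finite Aᵐᵒᵖ V] [Module.Finite Aᵐᵒᵖ P]
    [Module.Finite Aᵐᵒᵖ Z] [Module.Finite Aᵐᵒᵖ X] [Module.Finite Aᵐᵒᵖ Y]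
    (s : U →ₗ[Aᵐᵒᵖ] V) (ι : U →ₗ[Aᵐᵒᵖ] P) (t : V →ₗ[Aᵐᵒᵖ] Z) (π : P →ₗ[Aᵐᵒᵖ] Z)
    (f : X →ₗ[Aᵐᵒᵖ] Y) (v : X →ₗ[Aᵐᵒᵖ] U) (w : Y →ₗ[Aᵐᵒᵖ] V)
    (h₁ : IsShortExactSeq A (s.prod ι) (t.coprod π))
    (h₂ : IsShortExactSeq A (f.prod v) (w.coprod s)) :
    IsShortExactSeq A (f.prod (-(ι.comp v))) ((t.comp w).coprod π) ∧
    (IsPerfectExactSeq A (s.prod ι) (t.coprod π) →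
      IsPerfectExactSeq A (f.prod v) (w.coprod s) →
      IsPerfectExactSeq A (f.prod (-(ι.comp v))) ((t.comp w).coprod π)) := by
  obtain ⟨inj₁, ex₁, surj₁⟩ := h₁
  obtain ⟨inj₂, ex₂, surj₂⟩ := h₂
  have hc₁ : ∀ u : U, t (s u) + π (ι u) = 0 := fun u => (ex₁ ((s.prod ι) u)).mpr ⟨u, rfl⟩
  have hc₂ : ∀ x : X, w (f x) + s (v x) = 0 := fun x => (ex₂ ((f.prod v) x)).mpr ⟨x, rfl⟩
  -- Injectivity of the new left map
  have injNew : Function.Injective (f.prod (-(ι.comp v))) := by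
    intro a b hab
    have h0 : (f.prod (-(ι.comp v))) (a - b) = 0 := by rw [map_sub, hab, sub_self]
    have hf : f (a - b) = 0 := congrArg Prod.fst h0
    have hι : ι (v (a - b)) = 0 := by
      have h1 : -(ι (v (a - b))) = 0 := congrArg Prod.snd h0
      exact neg_eq_zero.mp h1
    have hs : s (v (a - b)) = 0 := by
      have h2 := hc₂ (a - b)
      rw [hf, map_zero, zero_add] at h2
      exact h2
    have hv : v (a - b) = 0 := by
      have h3 : (s.prod ι) (v (a - b)) = (s.prod ι) 0 := by
        rw [map_zero]
        show (s (v (a - b)), ι (v (a - b))) = ((0 : V), (0 : P))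
        rw [hs, hι]
      exact inj₁ h3
    have h4 : (f.prod v) (a - b) = (f.prod v) 0 := by
      rw [map_zero]
      show (f (a - b), v (a - b)) = ((0 : Y), (0 : U))
      rw [hf, hv]
    have := inj₂ h4
    rwa [sub_eq_zero] at this
  -- Exactness in the middle
  have exNew : Function.Exact (f.prod (-(ι.comp v))) ((t.comp w).coprod π) := by
    rintro ⟨y, p⟩
    constructor
    · intro h
      have h' : (t.coprod π) (w y, p) = 0 := by
        simpa using h
      obtain ⟨u, hu⟩ := (ex₁ (w y, p)).mp h'
      have hsu : s u = w y := congrArg Prod.fst hu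
      have hιu : ι u = p := congrArg Prod.snd hu
      have h'' : (w.coprod s) (y, -u) = 0 := by
        simp only [LinearMap.coprod_apply, map_neg, hsu]
        abel
      obtain ⟨x, hx⟩ := (ex₂ (y, -u)).mp h''
      have hfx : f x = y := congrArg Prod.fst hx
      have hvx : v x = -u := congrArg Prod.snd hx
      refine ⟨x, ?_⟩
      simp only [LinearMap.prod_apply, Function.prod, LinearMap.neg_apply, LinearMap.comp_apply,
        hfx, hvx, map_neg, neg_neg, hιu]
    · rintro ⟨x, hx⟩
      rw [← hx]
      have h2 : w (f x) = -(s (v x)) := eq_neg_of_add_eq_zero_left (hc₂ x)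
      simp only [LinearMap.coprod_apply, LinearMap.comp_apply, LinearMap.prod_apply,
        Function.prod, LinearMap.neg_apply, h2, map_neg]
      rw [← neg_add, hc₁, neg_zero]
  -- Surjectivity
  have surjNew : Function.Surjective ((t.comp w).coprod π) := by
    intro z
    obtain ⟨⟨v', p⟩, hvp⟩ := surj₁ z
    obtain ⟨⟨y, u⟩, hyu⟩ := surj₂ v'
    have hvp' : t v' + π p = z := hvp
    have hyu' : w y + s u = v' := hyu
    refine ⟨(y, p - ι u), ?_⟩
    have h2 : w y = v' - s u := by rw [← hyu']; abel
    have h4 : π (ι u) = -(t (s u)) := eq_neg_of_add_eq_zero_right (hc₁ u)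
    show t (w y) + π (p - ι u) = z
    rw [h2, map_sub, map_sub, h4, ← hvp']
    abel
  refine ⟨⟨injNew, exNew, surjNew⟩, ?_⟩
  rintro ⟨-, -, dex₁, dsurj₁⟩ ⟨-, -, dex₂, dsurj₂⟩
  refine ⟨⟨injNew, exNew, surjNew⟩, ?_, ?_, ?_⟩
  · -- injectivity of dual restriction, from surjectivity of the new right map
    intro φ₁ φ₂ h
    ext z
    obtain ⟨yp, rfl⟩ := surjNew z
    exact LinearMap.congr_fun h yp
  · -- exactness of the dual sequence in the middle
    intro φ
    constructor
    · intro h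
      have splitφ : ∀ (a : Y) (b : P), φ (a, b) = φ (a, 0) + φ (0, b) := by
        intro a b
        rw [← map_add, Prod.mk_add_mk, add_zero, zero_add]
      have hφ : ∀ x, φ (f x, 0) = φ (0, ι (v x)) := by
        intro x
        have h1 : φ ((f.prod (-(ι.comp v))) x) = 0 := LinearMap.congr_fun h x
        have h2 : φ (f x, -(ι (v x))) = 0 := h1
        rw [splitφ] at h2
        have h3 : φ (0, -(ι (v x))) = -φ (0, ι (v x)) := by
          rw [show ((0 : Y), -(ι (v x))) = -((0 : Y), ι (v x)) by simp, map_neg]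
        rw [h3, ← sub_eq_add_neg] at h2
        exact sub_eq_zero.mp h2
      -- Ψ : Y × U → A
      set Ψ : (Y × U) →ₗ[Aᵐᵒᵖ] A :=
        (φ.comp (LinearMap.inl Aᵐᵒᵖ Y P)).coprod (-((φ.comp (LinearMap.inr Aᵐᵒᵖ Y P)).comp ι))
        with hΨdef
      have hΨ0 : Ψ.comp (f.prod v) = 0 := by
        ext x
        simp only [hΨdef, LinearMap.comp_apply, LinearMap.prod_apply, Function.prod,
          LinearMap.coprod_apply, LinearMap.neg_apply, LinearMap.inl_apply,
          LinearMap.inr_apply, LinearMap.zero_apply]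
        rw [hφ x]
        abel
      obtain ⟨ρ, hρ⟩ := (dex₂ Ψ).mp hΨ0
      have hρ' : ∀ (a : Y) (b : U), ρ (w a + s b) = φ (a, 0) - φ (0, ι b) := by
        intro a b
        have := LinearMap.congr_fun hρ (a, b)
        simpa [hΨdef, sub_eq_add_neg] using this
      have hρw : ∀ a : Y, ρ (w a) = φ (a, 0) := by
        intro a
        have := hρ' a 0
        simpa [show ((0 : Y), (0 : P)) = 0 from rfl] using this
      have hρs : ∀ b : U, ρ (s b) = -φ (0, ι b) := by
        intro b
        have := hρ' 0 b
        simpa [show ((0 : Y), (0 : P)) = 0 from rfl] using this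
      set Θ : (V × P) →ₗ[Aᵐᵒᵖ] A := ρ.coprod (φ.comp (LinearMap.inr Aᵐᵒᵖ Y P)) with hΘdef
      have hΘ0 : Θ.comp (s.prod ι) = 0 := by
        ext u
        simp only [hΘdef, LinearMap.comp_apply, LinearMap.prod_apply, Function.prod,
          LinearMap.coprod_apply, LinearMap.inr_apply, LinearMap.zero_apply, hρs u]
        abel
      obtain ⟨θ, hθ⟩ := (dex₁ Θ).mp hΘ0
      refine ⟨θ, ?_⟩
      refine LinearMap.ext fun yp => ?_
      obtain ⟨a, b⟩ := yp
      have h5 := LinearMap.congr_fun hθ (w a, b)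
      have h6 : θ (t (w a) + π b) = ρ (w a) + φ (0, b) := by
        simpa [hΘdef] using h5
      show θ (t (w a) + π b) = φ (a, b)
      rw [h6, hρw a, ← splitφ]
    · rintro ⟨θ, rfl⟩
      ext x
      have hz : ((t.comp w).coprod π) ((f.prod (-(ι.comp v))) x) = 0 :=
        (exNew ((f.prod (-(ι.comp v))) x)).mpr ⟨x, rfl⟩
      show θ (((t.comp w).coprod π) ((f.prod (-(ι.comp v))) x)) = 0
      rw [hz, map_zero]
  · -- surjectivity of the dual restriction
    intro ψ
    obtain ⟨Φ, hΦ⟩ := dsurj₂ ψ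
    obtain ⟨Γ, hΓ⟩ := dsurj₁ (Φ.comp (LinearMap.inr Aᵐᵒᵖ Y U))
    refine ⟨(Φ.comp (LinearMap.inl Aᵐᵒᵖ Y U)
        - (Γ.comp (LinearMap.inl Aᵐᵒᵖ V P)).comp w).coprod
        (-(Γ.comp (LinearMap.inr Aᵐᵒᵖ V P))), ?_⟩
    ext x
    have splitΦ : ∀ (a : Y) (b : U), Φ (a, b) = Φ (a, 0) + Φ (0, b) := by
      intro a b
      rw [← map_add, Prod.mk_add_mk, add_zero, zero_add]
    have splitΓ : ∀ (a : V) (b : P), Γ (a, b) = Γ (a, 0) + Γ (0, b) := by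
      intro a b
      rw [← map_add, Prod.mk_add_mk, add_zero, zero_add]
    have h1 : Φ (f x, v x) = ψ x := LinearMap.congr_fun hΦ x
    have h2 : Γ (s (v x), ι (v x)) = Φ (0, v x) := LinearMap.congr_fun hΓ (v x)
    have h3 : w (f x) = -(s (v x)) := eq_neg_of_add_eq_zero_left (hc₂ x)
    show Φ (f x, 0) - Γ (w (f x), 0) + -Γ (0, -(ι (v x))) = ψ x
    have h4 : Γ (w (f x), 0) = -Γ (s (v x), 0) := by
      rw [h3, show ((-(s (v x)), (0 : P)) : V × P) = -(s (v x), 0) by simp, map_neg]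
    have h5 : Γ ((0 : V), -(ι (v x))) = -Γ (0, ι (v x)) := by
      rw [show ((0 : V), -(ι (v x))) = -((0 : V), ι (v x)) by simp, map_neg]
    rw [h4, h5, neg_neg, ← h1, splitΦ (f x) (v x), ← h2, splitΓ (s (v x)) (ι (v x))]
    abel
end

section
/- Let 0 → X →f E →g Z → 0 be an almost split sequence of finitely generated right A-modules. Then f factors through a finitely generated projective right A-module if and only if X is projective or E is projective. -/
section Aux
variable {R : Type*} [Ring R]

/-- Descend a map killing `ker g` through a surjection `g`. -/
lemma descend_through_surjective {E Z W : Type*} [AddCommGroup E] [AddCommGroup Z]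
    [AddCommGroup W] [Module R E] [Module R Z] [Module R W]
    (g : E →ₗ[R] Z) (hg : Function.Surjective g) (u : E →ₗ[R] W)
    (h : ∀ e, g e = 0 → u e = 0) : ∃ s : Z →ₗ[R] W, s.comp g = u := by
  refine ⟨((LinearMap.ker g).liftQ u (fun e he => h e he)).comp
    (g.quotKerEquivOfSurjective hg).symm.toLinearMap, ?_⟩
  ext e
  have h1 : (g.quotKerEquivOfSurjective hg) (Submodule.Quotient.mk e) = g e := by
    simp [LinearMap.quotKerEquivOfSurjective, LinearMap.quotKerEquivRange]
  have h2 : (g.quotKerEquivOfSurjective hg).symm (g e) = Submodule.Quotient.mk e := by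
    apply (g.quotKerEquivOfSurjective hg).injective
    simp [h1]
  simp [h2]
  rfl

lemma lift_of_mem_range {E X W : Type*} [AddCommGroup E] [AddCommGroup X]
    [AddCommGroup W] [Module R E] [Module R X] [Module R W]
    (f : X →ₗ[R] E) (hf : Function.Injective f) (v : W →ₗ[R] E)
    (hv : ∀ w, v w ∈ LinearMap.range f) : ∃ r : W →ₗ[R] X, f.comp r = v := by
  refine ⟨((LinearEquiv.ofInjective f hf).symm.toLinearMap).comp
    (v.codRestrict (LinearMap.range f) hv), ?_⟩
  ext w
  simp

lemma nilpotent_of_not_bijective {Z : Type*} [AddCommGroup Z] [Module R Z]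
    [IsArtinian R Z] [IsNoetherian R Z]
    (hind : ∀ N N' : Submodule R Z, IsCompl N N' → N = ⊥ ∨ N' = ⊥)
    (σ : Z →ₗ[R] Z) (hσ : ¬ Function.Bijective σ) : IsNilpotent σ := by
  obtain ⟨n, hn⟩ := Filter.eventually_atTop.mp σ.eventually_isCompl_ker_pow_range_pow
  have h := hn (n+1) (by omega)
  rcases hind _ _ h with hk | hr
  · exfalso
    apply hσ
    refine IsArtinian.bijective_of_injective_endomorphism σ ?_
    rw [← LinearMap.ker_eq_bot]
    rw [← le_bot_iff, ← hk]
    intro x hx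
    simp only [LinearMap.mem_ker] at hx ⊢
    rw [pow_succ, Module.End.mul_eq_comp, LinearMap.comp_apply, hx, map_zero]
  · exact ⟨n+1, LinearMap.range_eq_bot.mp hr⟩

lemma comp_pow_succ {X E : Type*} [AddCommGroup X] [AddCommGroup E]
    [Module R X] [Module R E] (f : X →ₗ[R] E) (r : E →ₗ[R] X) (n : ℕ) :
    (f.comp r) ^ (n+1) = f.comp (((r.comp f) ^ n).comp r) := by
  induction n with
  | zero => ext x; simp
  | succ n ih =>
    rw [pow_succ', ih, pow_succ']
    ext x; simp

end Aux

/-- For an almost split sequence `0 → X →f E →g Z → 0` of finitely generated right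
`A`-modules, `f` factors through a finitely generated projective right `A`-module
if and only if `X` is projective or `E` is projective. -/



theorem almostSplitSeq_fst_factorsThroughProjective_iff
    (k A : Type) [Field k] [Ring A] [Algebra k A] [FiniteDimensional k A]
    (X E Z : Type) [AddCommGroup X] [AddCommGroup E] [AddCommGroup Z]
    [Module Aᵐᵒᵖ X] [Module Aᵐᵒᵖ E] [Module Aᵐᵒᵖ Z]
    [Module.Finite Aᵐᵒᵖ X] [Module.Finite Aᵐᵒᵖ E] [Module.Finite Aᵐᵒᵖ Z]
    (f : X →ₗ[Aᵐᵒᵖ] E) (g : E →ₗ[Aᵐᵒᵖ] Z)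
    (hass : IsAlmostSplitSeq A f g) :
    (∃ (P : Type) (_ : AddCommGroup P) (_ : Module Aᵐᵒᵖ P),
      Module.Finite Aᵐᵒᵖ P ∧ Module.Projective Aᵐᵒᵖ P ∧
      ∃ (a : X →ₗ[Aᵐᵒᵖ] P) (b : P →ₗ[Aᵐᵒᵖ] E), b.comp a = f) ↔
    (Module.Projective Aᵐᵒᵖ X ∨ Module.Projective Aᵐᵒᵖ E) := by
  obtain ⟨⟨hfinj, hexact, hgsurj⟩, hnonsplit, hXind, hZind, hlas, hras⟩ := hass
  haveI : Module.Finite k Aᵐᵒᵖ := Module.Finite.equiv (MulOpposite.opLinearEquiv k)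
  haveI : IsArtinianRing Aᵐᵒᵖ := IsArtinianRing.of_finite k Aᵐᵒᵖ
  haveI : IsNoetherianRing Aᵐᵒᵖ :=
    isNoetherianRing_iff.mpr (isNoetherian_of_tower k inferInstance)
  have hgf : ∀ x : X, g (f x) = 0 := fun x => (hexact (f x)).mpr ⟨x, rfl⟩
  constructor
  · rintro ⟨P, hgrp, hmod, hPfin, hPproj, a, b, hba⟩
    haveI := hPfin; haveI := hPproj
    by_cases hsm : ∃ r : P →ₗ[Aᵐᵒᵖ] X, r.comp a = LinearMap.id
    · obtain ⟨r, hr⟩ := hsm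
      exact Or.inl (Module.Projective.of_split a r hr)
    · right
      obtain ⟨h, hh⟩ := hlas P a hsm
      have hub : ∀ x : X, b (h (f x)) = f x := by
        intro x
        have h1 := LinearMap.congr_fun hh x
        have h2 := LinearMap.congr_fun hba x
        simp only [LinearMap.comp_apply] at h1 h2
        rw [h1, h2]
      -- descend `1 - b ∘ h` through `g`
      obtain ⟨s, hs⟩ := descend_through_surjective g hgsurj
          ((1 : E →ₗ[Aᵐᵒᵖ] E) - b.comp h) (by
        intro e' he'
        obtain ⟨x, rfl⟩ := (hexact e').mp he'
        simp [LinearMap.sub_apply, hub x])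
      -- `g ∘ s` is not bijective
      have hσnotbij : ¬ Function.Bijective (g.comp s) := by
        intro hbij
        apply hnonsplit
        refine ⟨s.comp (LinearEquiv.ofBijective (g.comp s) hbij).symm.toLinearMap, ?_⟩
        ext z
        simp only [LinearMap.comp_apply, LinearMap.id_apply, LinearEquiv.coe_coe]
        exact (LinearEquiv.ofBijective (g.comp s) hbij).apply_symm_apply z
      have hnil : IsNilpotent (g.comp s) :=
        nilpotent_of_not_bijective hZind.2 _ hσnotbij
      have hunit : IsUnit ((1 : Z →ₗ[Aᵐᵒᵖ] Z) - g.comp s) := hnil.isUnit_one_sub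
      obtain ⟨w, hw⟩ := hunit.exists_left_inv
      have hw' : ∀ z, w (((1 : Z →ₗ[Aᵐᵒᵖ] Z) - g.comp s) z) = z := by
        intro z
        have := LinearMap.congr_fun hw z
        simpa [Module.End.mul_apply] using this
      have hkey : ∀ e', (((1 : Z →ₗ[Aᵐᵒᵖ] Z) - g.comp s)) (g e') = g (b (h e')) := by
        intro e'
        have h1 := LinearMap.congr_fun hs e'
        simp only [LinearMap.comp_apply, LinearMap.sub_apply, Module.End.one_apply] at h1 ⊢
        rw [h1, map_sub, sub_sub_cancel]
      -- lift `w ∘ g ∘ b` through `g`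
      obtain ⟨t, ht⟩ := Module.projective_lifting_property g (w.comp (g.comp b)) hgsurj
      have hgth : ∀ e', g (t (h e')) = g e' := by
        intro e'
        have h2 := LinearMap.congr_fun ht (h e')
        simp only [LinearMap.comp_apply] at h2
        rw [h2, ← hkey e', hw']
      -- produce `r : E → X` with `f ∘ r = 1 - t ∘ h`
      obtain ⟨r, hrr⟩ := lift_of_mem_range f hfinj ((1 : E →ₗ[Aᵐᵒᵖ] E) - t.comp h) (by
        intro e'
        have hz : g (((1 : E →ₗ[Aᵐᵒᵖ] E) - t.comp h) e') = 0 := by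
          simp [LinearMap.sub_apply, map_sub, hgth e']
        obtain ⟨x, hx⟩ := (hexact _).mp hz
        exact ⟨x, hx⟩)
      -- `r ∘ f` is not bijective, else `f` splits
      have hrf_notbij : ¬ Function.Bijective (r.comp f) := by
        intro hbij
        apply hnonsplit
        set ρ := (LinearEquiv.ofBijective (r.comp f) hbij).symm.toLinearMap.comp r with hρ
        have hρf : ∀ x, ρ (f x) = x := by
          intro x
          have := (LinearEquiv.ofBijective (r.comp f) hbij).symm_apply_apply x
          simpa [hρ] using this
        obtain ⟨s', hs'⟩ := descend_through_surjective g hgsurj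
            ((1 : E →ₗ[Aᵐᵒᵖ] E) - f.comp ρ) (by
          intro e' he'
          obtain ⟨x, rfl⟩ := (hexact e').mp he'
          simp [LinearMap.sub_apply, hρf x])
        refine ⟨s', ?_⟩
        ext z
        obtain ⟨e', rfl⟩ := hgsurj z
        have h1 := LinearMap.congr_fun hs' e'
        simp only [LinearMap.comp_apply, LinearMap.sub_apply, Module.End.one_apply,
          LinearMap.id_apply] at h1 ⊢
        rw [h1, map_sub, hgf, sub_zero]
      have hnilX : IsNilpotent (r.comp f) :=
        nilpotent_of_not_bijective hXind.2 _ hrf_notbij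
      obtain ⟨n, hn⟩ := hnilX
      have hnilE : IsNilpotent (f.comp r) := by
        refine ⟨n + 1, ?_⟩
        rw [comp_pow_succ, hn]
        ext e'; simp
      have hth : t.comp h = (1 : E →ₗ[Aᵐᵒᵖ] E) - f.comp r := by
        rw [hrr, sub_sub_cancel]
      have hunitE : IsUnit ((1 : E →ₗ[Aᵐᵒᵖ] E) - f.comp r) := hnilE.isUnit_one_sub
      obtain ⟨w', hw'E⟩ := hunitE.exists_left_inv
      refine Module.Projective.of_split h (w'.comp t) ?_
      have hassoc : (w'.comp t).comp h = w'.comp (t.comp h) := by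
        rw [LinearMap.comp_assoc]
      rw [hassoc, hth, ← Module.End.mul_eq_comp, hw'E]
      rfl
  · rintro (hX | hE)
    · exact ⟨X, inferInstance, inferInstance, inferInstance, hX, LinearMap.id, f,
        by rw [LinearMap.comp_id]⟩
    · exact ⟨E, inferInstance, inferInstance, inferInstance, hE, f, LinearMap.id,
        by rw [LinearMap.id_comp]⟩
end

section
/- Let 0 → X →f E →g Z → 0 be an almost split sequence of finitely generated right A-modules. Then E has no direct summand that is a node; that is, there do not exist a direct summand N of E and an almost split sequence 0 → N → E_N → T → 0 such that N is simple, neither projective nor injective, and E_N is projective. -/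
section Aux

variable {R : Type*} [Ring R]

/-- An idempotent endomorphism of an indecomposable module which is nonzero is the identity. -/
lemma idem_eq_id_of_indecomposable {M : Type*} [AddCommGroup M] [Module R M]
    (hind : ∀ N N' : Submodule R M, IsCompl N N' → N = ⊥ ∨ N' = ⊥)
    (e : M →ₗ[R] M) (he : ∀ x, e (e x) = e x) (hne : e ≠ 0) : e = LinearMap.id := by
  have hcompl : IsCompl (LinearMap.range e) (LinearMap.ker e) := by
    constructor
    · rw [disjoint_iff_inf_le]
      rintro x ⟨⟨y, rfl⟩, hk⟩
      have : e (e y) = 0 := hk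
      rw [he] at this
      simpa using this
    · rw [codisjoint_iff_le_sup]
      intro x _
      have hx : x = e x + (x - e x) := by abel
      rw [hx]
      exact Submodule.add_mem_sup ⟨x, rfl⟩ (by simp [LinearMap.mem_ker, map_sub, he])
  rcases hind _ _ hcompl with h | h
  · exfalso
    apply hne
    rw [LinearMap.range_eq_bot] at h
    exact h
  · ext x
    have hx : e x - x ∈ LinearMap.ker e := by simp [LinearMap.mem_ker, map_sub, he]
    rw [h] at hx
    have h0 : e x - x = 0 := hx
    simpa [LinearMap.id_apply] using sub_eq_zero.mp h0

/-- If `f` in an exact pair `(f, g)` with `g` surjective has a retraction, then `g` has a section. -/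
lemma exists_section_of_retraction {X E Z : Type*}
    [AddCommGroup X] [AddCommGroup E] [AddCommGroup Z]
    [Module R X] [Module R E] [Module R Z]
    (f : X →ₗ[R] E) (g : E →ₗ[R] Z)
    (hex : Function.Exact f g) (hsurj : Function.Surjective g)
    (r : E →ₗ[R] X) (hr : r.comp f = LinearMap.id) :
    ∃ s : Z →ₗ[R] E, g.comp s = LinearMap.id := by
  set π : E →ₗ[R] E := LinearMap.id - f.comp r with hπ
  have hrf : ∀ x, r (f x) = x := fun x => congrArg (fun m => m x) hr
  have hker : LinearMap.ker g ≤ LinearMap.ker π := by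
    intro e he
    rw [LinearMap.mem_ker] at he ⊢
    obtain ⟨x, rfl⟩ := (hex e).mp he
    simp [hπ, hrf]
  set q : (E ⧸ LinearMap.ker g) →ₗ[R] E := Submodule.liftQ _ π hker with hq
  set eqv := g.quotKerEquivOfSurjective hsurj with heqv
  refine ⟨q.comp eqv.symm.toLinearMap, ?_⟩
  ext z
  obtain ⟨e, he⟩ := Submodule.Quotient.mk_surjective _ (eqv.symm z)
  have h1 : eqv (Submodule.Quotient.mk e) = g e := rfl
  have h2 : g e = z := by rw [← h1, he, LinearEquiv.apply_symm_apply]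
  have hgf : ∀ x, g (f x) = 0 := fun x => hex.apply_apply_eq_zero x
  simp only [LinearMap.comp_apply, LinearMap.id_apply, LinearEquiv.coe_coe, ← he]
  have : q (Submodule.Quotient.mk e) = π e := rfl
  rw [this]
  simp [hπ, hgf, h2, map_sub]

end Aux


/-- The middle term `E` of an almost split sequence `0 → X →f E →g Z → 0` of finitely
generated right `A`-modules has no direct summand which is a node: there do not exist
a direct summand `N` of `E` and an almost split sequence `0 → N → E_N → T → 0` such
that `N` is simple, neither projective nor injective, and `E_N` is projective. -/
theorem almostSplitSeq_middle_no_node_summand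
    (k A : Type) [Field k] [Ring A] [Algebra k A] [FiniteDimensional k A]
    (X E Z : Type) [AddCommGroup X] [AddCommGroup E] [AddCommGroup Z]
    [Module Aᵐᵒᵖ X] [Module Aᵐᵒᵖ E] [Module Aᵐᵒᵖ Z]
    [Module.Finite Aᵐᵒᵖ X] [Module.Finite Aᵐᵒᵖ E] [Module.Finite Aᵐᵒᵖ Z]
    (f : X →ₗ[Aᵐᵒᵖ] E) (g : E →ₗ[Aᵐᵒᵖ] Z)
    (hass : IsAlmostSplitSeq A f g) :
    ¬ ∃ (N EN T : Type)
      (_ : AddCommGroup N) (_ : AddCommGroup EN) (_ : AddCommGroup T)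
      (_ : Module Aᵐᵒᵖ N) (_ : Module Aᵐᵒᵖ EN) (_ : Module Aᵐᵒᵖ T),
      Module.Finite Aᵐᵒᵖ N ∧ Module.Finite Aᵐᵒᵖ EN ∧ Module.Finite Aᵐᵒᵖ T ∧
      -- `N` is a direct summand of `E`
      (∃ (ι : N →ₗ[Aᵐᵒᵖ] E) (ρ : E →ₗ[Aᵐᵒᵖ] N), ρ.comp ι = LinearMap.id) ∧
      -- `0 → N → E_N → T → 0` is an almost split sequence
      (∃ (u : N →ₗ[Aᵐᵒᵖ] EN) (w : EN →ₗ[Aᵐᵒᵖ] T), IsAlmostSplitSeq A u w) ∧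
      -- `N` is a node and `E_N` is projective
      IsSimpleModule Aᵐᵒᵖ N ∧
      ¬ Module.Projective Aᵐᵒᵖ N ∧ ¬ Module.Injective Aᵐᵒᵖ N ∧
      Module.Projective Aᵐᵒᵖ EN := by
  rintro ⟨N, EN, T, instN, instEN, instT, instMN, instMEN, instMT,
    hNfin, hENfin, hTfin, ⟨ι, ρ, hρι⟩, ⟨u, w, hnode⟩, hsimple, hNproj, hNinj, hENproj⟩
  obtain ⟨⟨hfinj, hexact, hgsurj⟩, hnonsplit, ⟨hXnt, hXind⟩, ⟨hZnt, hZind⟩, hleft, hright⟩ := hass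
  obtain ⟨⟨huinj, huexact, hwsurj⟩, hunonsplit, ⟨hNnt, hNind⟩, hTind, huleft, huright⟩ := hnode
  haveI : IsSimpleModule Aᵐᵒᵖ N := hsimple
  haveI : Module.Projective Aᵐᵒᵖ EN := hENproj
  have hριa : ∀ n, ρ (ι n) = n := fun n => congrArg (fun m => m n) hρι
  -- `g ∘ ι` is not a split epimorphism
  have hgι_ne : ¬ ∃ s : Z →ₗ[Aᵐᵒᵖ] N, (g.comp ι).comp s = LinearMap.id := by
    rintro ⟨s, hs⟩
    refine hnonsplit ⟨ι.comp s, ?_⟩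
    ext z
    exact congrArg (fun m => m z) hs
  -- `g ∘ ι` is not a split monomorphism
  have hgι_nm : ¬ ∃ r' : Z →ₗ[Aᵐᵒᵖ] N, r'.comp (g.comp ι) = LinearMap.id := by
    rintro ⟨r', hr'⟩
    have hr'a : ∀ n, r' (g (ι n)) = n := fun n => congrArg (fun m => m n) hr'
    -- there is some `n₀` with `g (ι n₀) ≠ 0`
    obtain ⟨n₀, hn₀⟩ := exists_ne (0 : N)
    have hgι₀ : g (ι n₀) ≠ 0 := by
      intro h0
      exact hn₀ (by rw [← hr'a n₀, h0, map_zero])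
    set e : Z →ₗ[Aᵐᵒᵖ] Z := (g.comp ι).comp r' with he
    have hee : ∀ z, e (e z) = e z := by
      intro z
      simp only [he, LinearMap.comp_apply]
      rw [hr'a]
    have hene : e ≠ 0 := by
      intro h0
      apply hgι₀
      have : e (g (ι n₀)) = g (ι n₀) := by
        simp only [he, LinearMap.comp_apply]
        rw [hr'a]
      rw [h0] at this
      simpa using this.symm
    have heid : e = LinearMap.id := idem_eq_id_of_indecomposable hZind e hee hene
    exact hgι_ne ⟨r', heid⟩
  -- factor `g ∘ ι` through the left almost split map `u`
  obtain ⟨h, hh⟩ := huleft Z (g.comp ι) hgι_nm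
  -- lift `h` along the surjection `g` using projectivity of `EN`
  obtain ⟨h', hh'⟩ := Module.projective_lifting_property g h hgsurj
  have hh'a : ∀ y, g (h' y) = h y := fun y => congrArg (fun m => m y) hh'
  have hha : ∀ n, h (u n) = g (ι n) := fun n => congrArg (fun m => m n) hh
  -- `ι - h' ∘ u` lands in `ker g = range f`
  have hdmem : ∀ n, (ι - h'.comp u) n ∈ LinearMap.range f := by
    intro n
    apply (hexact _).mp
    simp only [LinearMap.sub_apply, LinearMap.comp_apply, map_sub]
    rw [hh'a, hha, sub_self]
  set p : N →ₗ[Aᵐᵒᵖ] X :=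
    (LinearEquiv.ofInjective f hfinj).symm.toLinearMap.comp
      ((ι - h'.comp u).codRestrict (LinearMap.range f) hdmem) with hp
  have hfp : ∀ n, f (p n) = ι n - h' (u n) := by
    intro n
    have h1 : (LinearEquiv.ofInjective f hfinj) (p n)
        = (ι - h'.comp u).codRestrict (LinearMap.range f) hdmem n := by
      simp only [hp, LinearMap.comp_apply, LinearEquiv.coe_coe]
      exact (LinearEquiv.ofInjective f hfinj).apply_symm_apply _
    have h2 : f (p n) = ((LinearEquiv.ofInjective f hfinj) (p n) : E) :=
      (LinearEquiv.ofInjective_apply f (p n)).symm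
    rw [h2, h1]
    rfl
  -- the key identity in `End N`
  set a : Module.End Aᵐᵒᵖ N := ρ.comp (h'.comp u) with ha
  set b : Module.End Aᵐᵒᵖ N := ρ.comp (f.comp p) with hb
  have hkey : a + b = (1 : Module.End Aᵐᵒᵖ N) := by
    ext n
    simp only [LinearMap.add_apply, ha, hb, LinearMap.comp_apply, Module.End.one_apply]
    rw [hfp, map_sub, hριa]
    abel
  by_cases ha0 : a = 0
  · -- then `ρ ∘ f ∘ p = id`, so `p` is a split mono; `X` indecomposable forces `f` split mono
    have hbid : b = (1 : Module.End Aᵐᵒᵖ N) := by rw [← hkey, ha0, zero_add]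
    have hbida : ∀ n, ρ (f (p n)) = n := by
      intro n
      have := congrArg (fun m : Module.End Aᵐᵒᵖ N => m n) hbid
      simpa [hb, LinearMap.comp_apply] using this
    set e' : X →ₗ[Aᵐᵒᵖ] X := p.comp (ρ.comp f) with he'
    have hee' : ∀ x, e' (e' x) = e' x := by
      intro x
      simp only [he', LinearMap.comp_apply]
      rw [hbida]
    obtain ⟨n₀, hn₀⟩ := exists_ne (0 : N)
    have hpn₀ : p n₀ ≠ 0 := by
      intro h0
      exact hn₀ (by rw [← hbida n₀, h0, map_zero, map_zero])
    have hene' : e' ≠ 0 := by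
      intro h0
      apply hpn₀
      have : e' (p n₀) = p n₀ := by
        simp only [he', LinearMap.comp_apply]
        rw [hbida]
      rw [h0] at this
      simpa using this.symm
    have he'id : e' = LinearMap.id := idem_eq_id_of_indecomposable hXind e' hee' hene'
    have hretr : (p.comp ρ).comp f = LinearMap.id := by
      ext x
      exact congrArg (fun m => m x) he'id
    obtain ⟨s, hs⟩ := exists_section_of_retraction f g hexact hgsurj (p.comp ρ) hretr
    exact hnonsplit ⟨s, hs⟩
  · -- `a` is a unit by Schur, so `u` is a split mono and the node sequence splits
    have hbij : Function.Bijective a := LinearMap.bijective_of_ne_zero ha0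
    set v : N →ₗ[Aᵐᵒᵖ] N := (LinearEquiv.ofBijective a hbij).symm.toLinearMap with hvdef
    have hva : ∀ n, v (a n) = n := fun n =>
      (LinearEquiv.ofBijective a hbij).symm_apply_apply n
    have hretr : ((v.comp ρ).comp h').comp u = LinearMap.id := by
      ext n
      simp only [LinearMap.comp_apply, LinearMap.id_apply]
      have := hva n
      simpa [ha, LinearMap.comp_apply] using this
    obtain ⟨s, hs⟩ := exists_section_of_retraction u w huexact hwsurj ((v.comp ρ).comp h') hretr
    exact hunonsplit ⟨s, hs⟩
end

section
/- Let Y be a finitely generated right A-module such that for every submodule Y' of Y and every submodule X of Y' with Y'/X simple, the short exact sequence 0 → X → Y' → Y'/X → 0 is perfect exact (equivalently, the restriction map Hom_A(Y',A) → Hom_A(X,A) is surjective). Then Hom_A(Y,A) = 0 if and only if Hom_A(S,A) = 0 for every composition factor S of Y, i.e., for every simple module S isomorphic to W/W' for submodules W' ⊆ W ⊆ Y. -/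
/-- For a finitely generated right `A`-module `Y` such that for every submodule `Y'` of
`Y` and every submodule `X` of `Y'` with `Y'/X` simple the restriction map
`Hom_A(Y',A) → Hom_A(X,A)` is surjective (i.e. the short exact sequence
`0 → X → Y' → Y'/X → 0` is perfect exact), one has `Hom_A(Y,A) = 0` if and only if
`Hom_A(S,A) = 0` for every composition factor `S = W/W'` of `Y`, with `W' ⊆ W ⊆ Y`
submodules and `W/W'` simple. -/
theorem hom_eq_zero_iff_hom_compositionFactors_eq_zero
    (k A : Type) [Field k] [Ring A] [Algebra k A] [FiniteDimensional k A]
    (Y : Type) [AddCommGroup Y] [Module Aᵐᵒᵖ Y] [Module.Finite Aᵐᵒᵖ Y]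
    (h : ∀ (Y' : Submodule Aᵐᵒᵖ Y) (X : Submodule Aᵐᵒᵖ Y'),
      IsSimpleModule Aᵐᵒᵖ (Y' ⧸ X) →
      Function.Surjective (fun φ : Y' →ₗ[Aᵐᵒᵖ] A => φ.comp X.subtype)) :
    (∀ φ : Y →ₗ[Aᵐᵒᵖ] A, φ = 0) ↔
      (∀ (W : Submodule Aᵐᵒᵖ Y) (W' : Submodule Aᵐᵒᵖ W),
        IsSimpleModule Aᵐᵒᵖ (W ⧸ W') → ∀ φ : (W ⧸ W') →ₗ[Aᵐᵒᵖ] A, φ = 0) := by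
  have hNR : IsNoetherianRing Aᵐᵒᵖ := isNoetherian_of_tower k (inferInstance : IsNoetherian k Aᵐᵒᵖ)
  have hAR : IsArtinianRing Aᵐᵒᵖ := isArtinian_of_tower k (inferInstance : IsArtinian k Aᵐᵒᵖ)
  have hN : IsNoetherian Aᵐᵒᵖ Y := isNoetherian_of_isNoetherianRing_of_finite Aᵐᵒᵖ Y
  have hA : IsArtinian Aᵐᵒᵖ Y := isArtinian_of_fg_of_artinian'
  have hSA : IsStronglyAtomic (Submodule Aᵐᵒᵖ Y) :=
    IsStronglyAtomic.of_wellFounded_lt (IsWellFounded.wf (r := (· < ·)))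
  constructor
  · intro hzero W W' hs φ
    -- extension lemma: any functional on a submodule extends to Y
    have ext : ∀ (V : Submodule Aᵐᵒᵖ Y) (ψ : V →ₗ[Aᵐᵒᵖ] A),
        ∃ Ψ : Y →ₗ[Aᵐᵒᵖ] A, ∀ v : V, Ψ v = ψ v := by
      intro V
      induction V using IsNoetherian.induction with
      | _ V ih =>
        intro ψ
        by_cases hV : V = ⊤
        · subst hV
          exact ⟨ψ.comp (LinearEquiv.ofTop ⊤ rfl).symm.toLinearMap, fun v => by
            exact congrArg ψ (Subtype.ext rfl)⟩
        · obtain ⟨V₁, hcov, -⟩ := (lt_top_iff_ne_top.mpr hV).exists_covby_le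
          have hsimple := (covBy_iff_quot_is_simple hcov.le).mp hcov
          obtain ⟨Φ, hΦ⟩ := h V₁ (Submodule.comap V₁.subtype V) hsimple
            (ψ.comp (Submodule.comapSubtypeEquivOfLe hcov.le).toLinearMap)
          obtain ⟨Ψ, hΨ⟩ := ih V₁ hcov.lt Φ
          refine ⟨Ψ, fun v => ?_⟩
          have hv1 : (v : Y) ∈ V₁ := hcov.le v.2
          have h1 : Ψ (v : Y) = Φ ⟨(v : Y), hv1⟩ := hΨ ⟨(v : Y), hv1⟩
          have h2 := congrFun (congrArg DFunLike.coe hΦ) ⟨⟨(v : Y), hv1⟩, v.2⟩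
          simp only [LinearMap.comp_apply, Submodule.subtype_apply] at h2
          rw [h1, h2]
          exact congrArg ψ (Subtype.ext rfl)
    obtain ⟨Ψ, hΨ⟩ := ext W (φ.comp W'.mkQ)
    ext x
    have := hΨ x
    rw [hzero Ψ] at this
    simpa using this.symm
  · intro hcf φ
    by_contra hne
    have hK : LinearMap.ker φ ≠ ⊤ := by
      intro hKt
      exact hne (LinearMap.ker_eq_top.mp hKt)
    obtain ⟨W, hcov, -⟩ := (lt_top_iff_ne_top.mpr hK).exists_covby_le
    have hsimple := (covBy_iff_quot_is_simple hcov.le).mp hcov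
    set W' : Submodule Aᵐᵒᵖ W := Submodule.comap W.subtype (LinearMap.ker φ) with hW'
    have hle : W' ≤ LinearMap.ker (φ.comp W.subtype) := by
      intro x hx
      simpa [hW'] using hx
    have := hcf W W' hsimple (W'.liftQ (φ.comp W.subtype) hle)
    have hWker : W ≤ LinearMap.ker φ := by
      intro y hy
      have := congrFun (congrArg DFunLike.coe this) (Submodule.Quotient.mk ⟨y, hy⟩)
      simpa using this
    exact LT.lt.not_ge hcov.lt hWker
end
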